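/- Fix T ≥ 2. If the threshold θ satisfies (T − √(2T))/2 ≤ θ ≤ T − √(2T), then (1/2)(T − θ)² ≥ T ≥ √(2T). Hence for such θ, the agent with a free-reimbursement safety net, who explores the striving arm for the full duration T − √(2T) and witnesses the increase, earns reward (1/2)(T − θ)² ≥ T, while the agent without a safety net, who can only explore for (T − √(2T))/2 time and thus never witnesses the increase, earns only √(2T). -/
import Mathlib


theorem stmt11 (T θ : ℝ) (hT : 2 ≤ T)
    (hθ1 : (T - Real.sqrt (2 * T)) / 2 ≤ θ)
    (hθ2 : θ ≤ T - Real.sqrt (2 * T)) :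
    T ≤ (1 / 2) * (T - θ) ^ 2 ∧ Real.sqrt (2 * T) ≤ T := by
  have h2T : (0:ℝ) ≤ 2 * T := by linarith
  have hs : Real.sqrt (2 * T) ^ 2 = 2 * T := Real.sq_sqrt h2T
  have hsle : Real.sqrt (2 * T) ≤ T - θ := by linarith
  have hsnn : 0 ≤ Real.sqrt (2 * T) := Real.sqrt_nonneg _
  constructor
  · nlinarith [sq_nonneg (T - θ - Real.sqrt (2 * T))]
  · have : Real.sqrt (2 * T) ≤ Real.sqrt (T ^ 2) := by
      apply Real.sqrt_le_sqrt; nlinarith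
    rwa [Real.sqrt_sq (by linarith)] at this
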